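/- Let X be an ordered Banach space with a normal cone P with normal constant N, and let u_n, v_n, λ_n be sequences with u_0 ≤ u_n ≤ u_{n+k} ≤ v_n ≤ v_0 (in the cone order), u_n ≥ λ_n v_n with 0 ≤ λ_n ≤ 1 and λ_n → 1. Then both (u_n) and (v_n) converge to a common limit. -/
import Mathlib


/-- In a Banach space ordered by a normal cone `P`, monotone sequences `u ≤ v`
with `λ_n v_n ≤ u_n` and `λ_n → 1` converge to a common limit. -/
theorem stmt_7 {X : Type*} [NormedAddCommGroup X] [NormedSpace ℝ X] [CompleteSpace X]
    (P : Set X) (hclosed : IsClosed P) (hconv : Convex ℝ P)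
    (hadd : ∀ x ∈ P, ∀ y ∈ P, x + y ∈ P) (hpointed : P ∩ (-P) = {0})
    (N : ℝ) (hN : 0 < N)
    (hnormal : ∀ x y : X, x ∈ P → y - x ∈ P → ‖x‖ ≤ N * ‖y‖)
    (u v : ℕ → X) (lam : ℕ → ℝ)
    (hu0 : u 0 ∈ P)
    (hu : ∀ n, u (n + 1) - u n ∈ P)
    (hv : ∀ n, v n - v (n + 1) ∈ P)
    (huv : ∀ n, v n - u n ∈ P)
    (hlam : ∀ n, u n - lam n • v n ∈ P)
    (hlam0 : ∀ n, 0 ≤ lam n) (hlam1 : ∀ n, lam n ≤ 1)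
    (hlamlim : Filter.Tendsto lam Filter.atTop (nhds 1)) :
    ∃ L : X, Filter.Tendsto u Filter.atTop (nhds L) ∧
      Filter.Tendsto v Filter.atTop (nhds L) := by
  have h0P : (0 : X) ∈ P := by
    have : (0 : X) ∈ P ∩ (-P) := by rw [hpointed]; rfl
    exact this.1
  -- monotonicity
  have huc : ∀ n m, n ≤ m → u m - u n ∈ P := by
    intro n m h
    induction m, h using Nat.le_induction with
    | base => simpa using h0P
    | succ m hm ih =>
        have := hadd _ (hu m) _ ih
        simpa [sub_add_sub_cancel] using this
  have hvc : ∀ n m, n ≤ m → v n - v m ∈ P := by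
    intro n m h
    induction m, h using Nat.le_induction with
    | base => simpa using h0P
    | succ m hm ih =>
        have := hadd _ ih _ (hv m)
        simpa [sub_add_sub_cancel] using this
  have hvu : ∀ n m, n ≤ m → v n - u m ∈ P := by
    intro n m h
    have := hadd _ (hvc n m h) _ (huv m)
    simpa [sub_add_sub_cancel] using this
  set M : ℝ := ‖u 0‖ + N * ‖v 0 - u 0‖ with hMdef
  have hMbound : ∀ n, ‖v n‖ ≤ M := by
    intro n
    have hx : v n - u 0 ∈ P := by
      have := hadd _ (huv n) _ (huc 0 n (Nat.zero_le n))
      simpa [sub_add_sub_cancel] using this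
    have hyx : (v 0 - u 0) - (v n - u 0) ∈ P := by
      have := hvc 0 n (Nat.zero_le n)
      simpa [sub_sub_sub_cancel_right] using this
    have hnn := hnormal _ _ hx hyx
    calc ‖v n‖ = ‖u 0 + (v n - u 0)‖ := by congr 1; abel
      _ ≤ ‖u 0‖ + ‖v n - u 0‖ := norm_add_le _ _
      _ ≤ M := by rw [hMdef]; linarith
  -- key estimate
  have hkey : ∀ n, ‖v n - u n‖ ≤ N * ((1 - lam n) * M) := by
    intro n
    have hx : v n - u n ∈ P := huv n
    have hyx : (1 - lam n) • v n - (v n - u n) ∈ P := by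
      have := hlam n
      have heq : (1 - lam n) • v n - (v n - u n) = u n - lam n • v n := by
        rw [sub_smul, one_smul]; abel
      rw [heq]; exact this
    have hnn := hnormal _ _ hx hyx
    have hnorm : ‖(1 - lam n) • v n‖ = (1 - lam n) * ‖v n‖ := by
      rw [norm_smul, Real.norm_eq_abs, abs_of_nonneg (by linarith [hlam1 n])]
    rw [hnorm] at hnn
    have h1 : (1 - lam n) * ‖v n‖ ≤ (1 - lam n) * M :=
      mul_le_mul_of_nonneg_left (hMbound n) (by linarith [hlam1 n])
    calc ‖v n - u n‖ ≤ N * ((1 - lam n) * ‖v n‖) := hnn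
      _ ≤ N * ((1 - lam n) * M) := by
        exact mul_le_mul_of_nonneg_left h1 (le_of_lt hN)
  set b : ℕ → ℝ := fun k => N * (N * ((1 - lam k) * M)) with hbdef
  have hb0 : Filter.Tendsto b Filter.atTop (nhds 0) := by
    have h1 : Filter.Tendsto (fun k => 1 - lam k) Filter.atTop (nhds 0) := by
      have := hlamlim.const_sub 1
      simpa using this
    have := ((h1.mul_const M).const_mul N).const_mul N
    simpa using this
  have hcauchy : CauchySeq u := by
    apply cauchySeq_of_le_tendsto_0 b _ hb0
    intro n m k hn hm
    rcases le_total n m with h | h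
    · rw [dist_comm, dist_eq_norm]
      have hx : u m - u n ∈ P := huc n m h
      have hyx : (v k - u k) - (u m - u n) ∈ P := by
        have := hadd _ (hvu k m (le_trans hn h)) _ (huc k n hn)
        have heq : v k - u m + (u n - u k) = (v k - u k) - (u m - u n) := by abel
        rwa [heq] at this
      have hnn := hnormal _ _ hx hyx
      calc ‖u m - u n‖ ≤ N * ‖v k - u k‖ := hnn
        _ ≤ N * (N * ((1 - lam k) * M)) :=
            mul_le_mul_of_nonneg_left (hkey k) (le_of_lt hN)
    · rw [dist_eq_norm]
      have hx : u n - u m ∈ P := huc m n h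
      have hyx : (v k - u k) - (u n - u m) ∈ P := by
        have := hadd _ (hvu k n (le_trans hm h)) _ (huc k m hm)
        have heq : v k - u n + (u m - u k) = (v k - u k) - (u n - u m) := by abel
        rwa [heq] at this
      have hnn := hnormal _ _ hx hyx
      calc ‖u n - u m‖ ≤ N * ‖v k - u k‖ := hnn
        _ ≤ N * (N * ((1 - lam k) * M)) :=
            mul_le_mul_of_nonneg_left (hkey k) (le_of_lt hN)
  obtain ⟨L, hL⟩ := cauchySeq_tendsto_of_complete hcauchy
  refine ⟨L, hL, ?_⟩
  have hdiff : Filter.Tendsto (fun n => v n - u n) Filter.atTop (nhds 0) := by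
    apply squeeze_zero_norm (fun n => hkey n)
    have h1 : Filter.Tendsto (fun k => 1 - lam k) Filter.atTop (nhds 0) := by
      simpa using hlamlim.const_sub 1
    have := (h1.mul_const M).const_mul N
    simpa using this
  have := hL.add hdiff
  simpa using this
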